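/- Let H be a real Hilbert space, let R : H → [0,∞] be convex and absolutely one-homogeneous, let α > 0, and let f = f₀ + g with f₀, g ∈ H, R(f₀) = 0 and ⟪f₀, g⟫ = 0. If û ∈ H minimises the functional u ↦ ½‖u − f‖² + α·R(u) over H, then u⋆ := û − f₀ minimises the functional u ↦ ½‖u − g‖² + α·R(u) over H and satisfies ⟪f₀, u⋆⟫ = 0. -/

import Mathlib

open scoped ENNReal

/-- In a real Hilbert space, if `uhat` minimises
`u ↦ ½‖u − f‖² + α·R(u)` with `f = f₀ + g`, `R f₀ = 0` and `⟪f₀, g⟫ = 0`,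
then `u⋆ = uhat − f₀` minimises `u ↦ ½‖u − g‖² + α·R(u)` and `⟪f₀, u⋆⟫ = 0`. -/
theorem stmt1 {H : Type*} [NormedAddCommGroup H] [InnerProductSpace ℝ H] (R : H → ℝ≥0∞)
    (hconv : ∀ (u v : H) (t : ℝ), 0 ≤ t → t ≤ 1 →
      R (t • u + (1 - t) • v) ≤ ENNReal.ofReal t * R u + ENNReal.ofReal (1 - t) * R v)
    (hhom : ∀ (c : ℝ) (u : H), R (c • u) = ENNReal.ofReal |c| * R u)
    (α : ℝ) (hα : 0 < α) (f f₀ g : H) (hfdec : f = f₀ + g) (hf₀ : R f₀ = 0)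
    (horth : (inner ℝ f₀ g : ℝ) = 0) (uhat : H)
    (hmin : ∀ u : H,
      ENNReal.ofReal (‖uhat - f‖ ^ 2 / 2) + ENNReal.ofReal α * R uhat ≤
        ENNReal.ofReal (‖u - f‖ ^ 2 / 2) + ENNReal.ofReal α * R u) :
    (∀ u : H,
      ENNReal.ofReal (‖(uhat - f₀) - g‖ ^ 2 / 2) + ENNReal.ofReal α * R (uhat - f₀) ≤
        ENNReal.ofReal (‖u - g‖ ^ 2 / 2) + ENNReal.ofReal α * R u) ∧
    (inner ℝ f₀ (uhat - f₀) : ℝ) = 0 := by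
  -- R 0 = 0
  have R0 : R 0 = 0 := by
    have := hhom 0 0
    simpa using this
  -- subadditivity
  have hsub : ∀ u v : H, R (u + v) ≤ R u + R v := by
    intro u v
    have key : ((2:ℝ)) • ((1/2 : ℝ) • u + (1/2 : ℝ) • v) = u + v := by
      rw [smul_add, smul_smul, smul_smul]; norm_num
    have h2 := hhom 2 ((1/2 : ℝ) • u + (1/2 : ℝ) • v)
    rw [key] at h2
    have hc := hconv u v (1/2) (by norm_num) (by norm_num)
    norm_num at hc
    rw [h2, show |(2:ℝ)| = 2 by norm_num]
    calc ENNReal.ofReal 2 * R ((1/2 : ℝ) • u + (1/2 : ℝ) • v)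
        ≤ ENNReal.ofReal 2 * (ENNReal.ofReal (1/2) * R u + ENNReal.ofReal (1/2) * R v) :=
          mul_le_mul_right (by simpa using hc) _
      _ = R u + R v := by
          rw [mul_add, ← mul_assoc, ← mul_assoc,
            ← ENNReal.ofReal_mul (by norm_num : (0:ℝ) ≤ 2)]
          norm_num
  -- translation invariance by null vectors
  have hshift : ∀ (w : H), R w = 0 → ∀ u : H, R (u + w) = R u := by
    intro w hw u
    have hneg : R (-w) = 0 := by
      have := hhom (-1) w
      simpa [hw] using this
    apply le_antisymm
    · calc R (u + w) ≤ R u + R w := hsub u w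
        _ = R u := by simp [hw]
    · have h := hsub (u + w) (-w)
      simpa [hneg] using h
  have hf₀' : R (-f₀) = 0 := by
    have := hhom (-1) f₀
    simpa [hf₀] using this
  have e4 : R (uhat - f₀) = R uhat := by
    have := hshift (-f₀) hf₀' uhat
    simpa [sub_eq_add_neg] using this
  -- Part 1
  have part1 : ∀ u : H,
      ENNReal.ofReal (‖(uhat - f₀) - g‖ ^ 2 / 2) + ENNReal.ofReal α * R (uhat - f₀) ≤
        ENNReal.ofReal (‖u - g‖ ^ 2 / 2) + ENNReal.ofReal α * R u := by
    intro u
    have h := hmin (u + f₀)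
    have e1 : u + f₀ - f = u - g := by rw [hfdec]; abel
    have e2 : uhat - f = (uhat - f₀) - g := by rw [hfdec]; abel
    have e3 : R (u + f₀) = R u := hshift f₀ hf₀ u
    rw [e1, e2, e3] at h
    rw [e4]
    exact h
  refine ⟨part1, ?_⟩
  -- finiteness of R uhat
  have hfin : R uhat ≠ ⊤ := by
    intro htop
    have h0 := hmin 0
    rw [R0, htop] at h0
    have hα' : ENNReal.ofReal α ≠ 0 := (ENNReal.ofReal_pos.mpr hα).ne'
    rw [ENNReal.mul_top hα'] at h0
    simp only [add_top, mul_zero, add_zero] at h0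
    exact (ENNReal.ofReal_ne_top) (top_le_iff.mp h0)
  set c : ℝ := (inner ℝ (uhat - f) f₀ : ℝ) with hc_def
  set d : ℝ := ‖f₀‖ ^ 2 with hd_def
  have hd : 0 ≤ d := by positivity
  have hexp : ∀ s : ℝ, 0 ≤ 2 * (s * c) + s ^ 2 * d := by
    intro s
    have hs0 : R (s • f₀) = 0 := by
      have := hhom s f₀
      simpa [hf₀] using this
    have hRe : R (uhat + s • f₀) = R uhat := hshift (s • f₀) hs0 uhat
    have h := hmin (uhat + s • f₀)
    rw [hRe] at h
    have hct : ENNReal.ofReal α * R uhat ≠ ⊤ :=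
      ENNReal.mul_ne_top ENNReal.ofReal_ne_top hfin
    have h2 : ENNReal.ofReal (‖uhat - f‖ ^ 2 / 2) ≤
        ENNReal.ofReal (‖uhat + s • f₀ - f‖ ^ 2 / 2) :=
      (ENNReal.add_le_add_iff_right hct).mp h
    have h3 : ‖uhat - f‖ ^ 2 / 2 ≤ ‖uhat + s • f₀ - f‖ ^ 2 / 2 :=
      (ENNReal.ofReal_le_ofReal_iff (by positivity)).mp h2
    have e : uhat + s • f₀ - f = (uhat - f) + s • f₀ := by abel
    have hn : ‖uhat + s • f₀ - f‖ ^ 2 = ‖uhat - f‖ ^ 2 + 2 * (s * c) + s ^ 2 * d := by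
      rw [e, norm_add_sq_real, real_inner_smul_right, norm_smul, Real.norm_eq_abs,
        mul_pow, sq_abs, hc_def, hd_def]
    rw [hn] at h3
    linarith
  have hc0 : c = 0 := by
    by_contra hne
    have hd1 : (0:ℝ) < d + 1 := by linarith
    have h1 := hexp (-c / (d + 1))
    have hc2 : 0 < c ^ 2 := by positivity
    have hne1 : (d + 1 : ℝ) ≠ 0 := by positivity
    have heq : 2 * (-c / (d + 1) * c) + (-c / (d + 1)) ^ 2 * d
        = -(c ^ 2 * (d + 2)) / (d + 1) ^ 2 := by
      field_simp
      ring
    rw [heq] at h1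
    have hlt : -(c ^ 2 * (d + 2)) / (d + 1) ^ 2 < 0 := by
      apply div_neg_of_neg_of_pos
      · nlinarith
      · positivity
    linarith
  have efg : uhat - f₀ = (uhat - f) + g := by rw [hfdec]; abel
  rw [efg, inner_add_right, horth, add_zero, real_inner_comm]
  exact hc0
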